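/- Let X_1, X_2, … be i.i.d. real random variables with mean μ such that X_k − μ is 1-sub-Gaussian, and let μ̂_n = (1/n)·Σ_{k=1}^n X_k. Then for any real constant c ≥ 1 and any δ with 0 < δ < c, with probability at least 1 − δ/c, simultaneously for every integer n ≥ 1: |μ̂_n − μ| ≤ √( ((1+n)/n²)·(1 + 2·log( c·√(1+n) / δ )) ). -/

import Mathlib

set_option linter.unusedSectionVars false
set_option maxHeartbeats 1000000
open Real


open MeasureTheory ProbabilityTheory
open scoped ENNReal

lemma gauss_key (a s : ℝ) (ha : 0 < a) :
    Integrable (fun l : ℝ => Real.exp (s * l - a * l ^ 2 / 2)) volume ∧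
    ∫ l : ℝ, Real.exp (s * l - a * l ^ 2 / 2)
      = Real.exp (s ^ 2 / (2 * a)) * Real.sqrt (2 * Real.pi / a) := by
  have ha2 : 0 < a / 2 := by linarith
  have key : ∀ l : ℝ, Real.exp (s * l - a * l ^ 2 / 2)
      = Real.exp (s ^ 2 / (2 * a)) * Real.exp (-(a/2) * (l - s / a) ^ 2) := by
    intro l
    rw [← Real.exp_add]
    congr 1
    have hne : a ≠ 0 := ha.ne'
    field_simp
    ring
  have hint : Integrable (fun l : ℝ => Real.exp (-(a/2) * (l - s/a) ^ 2)) volume := by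
    have := (integrable_exp_neg_mul_sq ha2).comp_sub_right (s/a)
    simpa using this
  constructor
  · simp_rw [key]
    exact hint.const_mul _
  · simp_rw [key]
    rw [MeasureTheory.integral_const_mul]
    congr 1
    have h1 : ∫ l : ℝ, Real.exp (-(a/2) * (l - s/a) ^ 2)
        = ∫ l : ℝ, Real.exp (-(a/2) * l ^ 2) := by
      exact integral_sub_right_eq_self (μ := volume) (fun l => Real.exp (-(a/2) * l ^ 2)) (s/a)
    rw [h1, integral_gaussian]
    rw [div_div_eq_mul_div, mul_comm]

section AD
variable {Ω : Type*} [MeasurableSpace Ω] {P : Measure Ω} [IsProbabilityMeasure P]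
  {X : ℕ → Ω → ℝ}

/-- centered partial sum -/
noncomputable def Sc (X : ℕ → Ω → ℝ) (μ : ℝ) (n : ℕ) (ω : Ω) : ℝ :=
  ∑ k ∈ Finset.range n, (X k ω - μ)

lemma Sc_meas (hmeas : ∀ k, Measurable (X k)) (μ : ℝ) (n : ℕ) :
    Measurable (Sc X μ n) :=
  Finset.measurable_sum _ (fun k _ => (hmeas k).sub measurable_const)

/-- partial sum reconstructed from the first N coordinates -/
noncomputable def Tv (μ : ℝ) (N m : ℕ) (v : Fin N → ℝ) : ℝ :=
  ∑ k ∈ Finset.range m, ((if h : k < N then v ⟨k, h⟩ else 0) - μ)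

lemma Tv_meas (μ : ℝ) (N m : ℕ) : Measurable (Tv μ N m) := by
  apply Finset.measurable_sum
  intro k _
  by_cases h : k < N
  · simp only [h, dif_pos]
    exact (measurable_pi_apply _).sub measurable_const
  · simp only [h, dif_neg, not_false_iff]
    exact measurable_const

lemma Tv_eq (μ : ℝ) (N m : ℕ) (hm : m ≤ N) (ω : Ω) :
    Tv μ N m (fun i => X i ω) = Sc X μ m ω := by
  unfold Tv Sc
  apply Finset.sum_congr rfl
  intro k hk
  have : k < N := lt_of_lt_of_le (Finset.mem_range.mp hk) hm
  simp [this]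

/-- Independence of a function of the first N variables and a function of the N-th. -/
lemma indep_past (hmeas : ∀ k, Measurable (X k))
    (hindep : iIndepFun X P)
    (N : ℕ) {F : (Fin N → ℝ) → ℝ} (hF : Measurable F) {h : ℝ → ℝ} (hh : Measurable h) :
    IndepFun (fun ω => F (fun i => X i ω)) (fun ω => h (X N ω)) P := by
  have hd : Disjoint (Finset.range N) ({N} : Finset ℕ) := by
    simp [Finset.disjoint_singleton_right]
  have h1 := hindep.indepFun_finset (Finset.range N) {N} hd hmeas
  have hφ : Measurable (fun v : {x // x ∈ Finset.range N} → ℝ =>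
      F (fun i : Fin N => v ⟨(i : ℕ), Finset.mem_range.mpr i.2⟩)) :=
    hF.comp (measurable_pi_lambda _ (fun i => measurable_pi_apply _))
  have hψ : Measurable (fun v : {x // x ∈ ({N} : Finset ℕ)} → ℝ =>
      h (v ⟨N, Finset.mem_singleton_self N⟩)) :=
    hh.comp (measurable_pi_apply _)
  exact h1.comp hφ hψ

end AD

section Main
variable {Ω : Type*} [MeasurableSpace Ω] {P : Measure Ω} [IsProbabilityMeasure P]
  {X : ℕ → Ω → ℝ} {μ : ℝ}

noncomputable def Av (c δ : ℝ) (n : ℕ) : ℝ :=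
  (1 + (n : ℝ)) * (1 + 2 * Real.log (c * Real.sqrt (1 + n) / δ))

noncomputable def expG (X : ℕ → Ω → ℝ) (μ l : ℝ) (n : ℕ) (ω : Ω) : ℝ :=
  Real.exp (l * Sc X μ n ω - n * l ^ 2 / 2)

def CSet (X : ℕ → Ω → ℝ) (μ c δ : ℝ) (N : ℕ) : Set Ω :=
  {ω | ∀ m ≤ N, (Sc X μ m ω) ^ 2 ≤ Av c δ m}

def BSet (X : ℕ → Ω → ℝ) (μ c δ : ℝ) (n : ℕ) : Set Ω :=
  {ω | Av c δ n < (Sc X μ n ω) ^ 2 ∧ ∀ m < n, (Sc X μ m ω) ^ 2 ≤ Av c δ m}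

variable (hmeas : ∀ k, Measurable (X k))
include hmeas

lemma CSet_meas (c δ : ℝ) (N : ℕ) : MeasurableSet (CSet X μ c δ N) := by
  have : CSet X μ c δ N = ⋂ m, ⋂ (_ : m ≤ N), {ω | (Sc X μ m ω) ^ 2 ≤ Av c δ m} := by
    ext ω; simp [CSet]
  rw [this]
  exact MeasurableSet.iInter fun m => MeasurableSet.iInter fun _ =>
    measurableSet_le ((Sc_meas hmeas μ m).pow_const 2) measurable_const

lemma BSet_meas (c δ : ℝ) (n : ℕ) : MeasurableSet (BSet X μ c δ n) := by
  have : BSet X μ c δ n = {ω | Av c δ n < (Sc X μ n ω) ^ 2} ∩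
      ⋂ m, ⋂ (_ : m < n), {ω | (Sc X μ m ω) ^ 2 ≤ Av c δ m} := by
    ext ω; simp [BSet]
  rw [this]
  exact (measurableSet_lt measurable_const ((Sc_meas hmeas μ n).pow_const 2)).inter
    (MeasurableSet.iInter fun m => MeasurableSet.iInter fun _ =>
      measurableSet_le ((Sc_meas hmeas μ m).pow_const 2) measurable_const)

variable (hindep : iIndepFun X P)
  (hsubg : ∀ k (l : ℝ),
      Integrable (fun ω => Real.exp (l * (X k ω - μ))) P ∧
      ∫ ω, Real.exp (l * (X k ω - μ)) ∂P ≤ Real.exp (l ^ 2 / 2))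
include hindep hsubg

omit hmeas hindep in
lemma step_int (l : ℝ) (N : ℕ) :
    Integrable (fun ω => Real.exp (l * (X N ω - μ) - l ^ 2 / 2)) P := by
  have : (fun ω => Real.exp (l * (X N ω - μ) - l ^ 2 / 2))
      = fun ω => Real.exp (l * (X N ω - μ)) * Real.exp (-(l ^ 2 / 2)) := by
    funext ω; rw [← Real.exp_add]; ring_nf
  rw [this]
  exact (hsubg N l).1.mul_const _

omit hmeas hindep in
lemma step_int_le (l : ℝ) (N : ℕ) :
    ∫ ω, Real.exp (l * (X N ω - μ) - l ^ 2 / 2) ∂P ≤ 1 := by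
  have h1 : (fun ω => Real.exp (l * (X N ω - μ) - l ^ 2 / 2))
      = fun ω => Real.exp (l * (X N ω - μ)) * Real.exp (-(l ^ 2 / 2)) := by
    funext ω; rw [← Real.exp_add]; ring_nf
  rw [h1, integral_mul_const]
  calc (∫ ω, Real.exp (l * (X N ω - μ)) ∂P) * Real.exp (-(l ^ 2 / 2))
      ≤ Real.exp (l ^ 2 / 2) * Real.exp (-(l ^ 2 / 2)) := by
        apply mul_le_mul_of_nonneg_right (hsubg N l).2 (Real.exp_nonneg _)
    _ = 1 := by rw [← Real.exp_add]; simp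

omit hmeas hindep hsubg in
lemma expG_succ (l : ℝ) (n : ℕ) (ω : Ω) :
    expG X μ l (n + 1) ω = expG X μ l n ω * Real.exp (l * (X n ω - μ) - l ^ 2 / 2) := by
  unfold expG Sc
  rw [← Real.exp_add, Finset.sum_range_succ]
  congr 1
  push_cast
  ring

lemma expG_indep (l : ℝ) (N : ℕ) :
    IndepFun (expG X μ l N) (fun ω => Real.exp (l * (X N ω - μ) - l ^ 2 / 2)) P := by
  have hF : Measurable (fun v : Fin N → ℝ => Real.exp (l * Tv μ N N v - N * l ^ 2 / 2)) :=
    (((Tv_meas μ N N).const_mul l).sub measurable_const).exp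
  have hh : Measurable (fun t : ℝ => Real.exp (l * (t - μ) - l ^ 2 / 2)) := by fun_prop
  have := indep_past hmeas hindep N hF hh
  have heq : (fun ω => Real.exp (l * Tv μ N N (fun i => X i ω) - N * l ^ 2 / 2))
      = expG X μ l N := by
    funext ω; rw [Tv_eq μ N N le_rfl]; rfl
  rwa [heq] at this

omit hindep hsubg in
lemma expG_meas (l : ℝ) (n : ℕ) : Measurable (expG X μ l n) :=
  Measurable.exp (((Sc_meas hmeas μ n).const_mul l).sub measurable_const)

lemma expG_int (l : ℝ) (n : ℕ) : Integrable (expG X μ l n) P := by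
  induction n with
  | zero =>
    have : expG X μ l 0 = fun _ => 1 := by
      funext ω; simp [expG, Sc]
    rw [this]; exact integrable_const 1
  | succ N ih =>
    have : expG X μ l (N + 1)
        = (expG X μ l N) * fun ω => Real.exp (l * (X N ω - μ) - l ^ 2 / 2) := by
      funext ω; exact expG_succ l N ω
    rw [this]
    exact (expG_indep hmeas hindep hsubg l N).integrable_mul ih
      (step_int hsubg l N)

lemma cset_indicator_indep (c δ l : ℝ) (N : ℕ) :
    IndepFun ((CSet X μ c δ N).indicator (expG X μ l N))
      (fun ω => Real.exp (l * (X N ω - μ) - l ^ 2 / 2)) P := by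
  set V : Set (Fin N → ℝ) := {v | ∀ m ≤ N, (Tv μ N m v) ^ 2 ≤ Av c δ m} with hV
  have hVmeas : MeasurableSet V := by
    have : V = ⋂ m, ⋂ (_ : m ≤ N), {v : Fin N → ℝ | (Tv μ N m v) ^ 2 ≤ Av c δ m} := by
      ext v; simp [hV]
    rw [this]
    exact MeasurableSet.iInter fun m => MeasurableSet.iInter fun _ =>
      measurableSet_le ((Tv_meas μ N m).pow_const 2) measurable_const
  have hF : Measurable (V.indicator
      (fun v : Fin N → ℝ => Real.exp (l * Tv μ N N v - N * l ^ 2 / 2))) :=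
    Measurable.indicator
      ((((Tv_meas μ N N).const_mul l).sub measurable_const).exp) hVmeas
  have hh : Measurable (fun t : ℝ => Real.exp (l * (t - μ) - l ^ 2 / 2)) := by fun_prop
  have key := indep_past hmeas hindep N hF hh
  have heq : (fun ω => V.indicator
        (fun v : Fin N → ℝ => Real.exp (l * Tv μ N N v - N * l ^ 2 / 2)) (fun i => X i ω))
      = (CSet X μ c δ N).indicator (expG X μ l N) := by
    funext ω
    have hmem : ((fun i : Fin N => X (i : ℕ) ω) ∈ V) ↔ ω ∈ CSet X μ c δ N := by
      constructor
      · intro h m hm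
        have := h m hm
        rwa [Tv_eq μ N m hm] at this
      · intro h m hm
        rw [Tv_eq μ N m hm]
        exact h m hm
    by_cases hω : ω ∈ CSet X μ c δ N
    · rw [Set.indicator_of_mem (hmem.mpr hω), Set.indicator_of_mem hω,
        Tv_eq μ N N le_rfl]
      rfl
    · rw [Set.indicator_of_notMem (fun h => hω (hmem.mp h)),
        Set.indicator_of_notMem hω]
  rwa [heq] at key

lemma ville (c δ : ℝ) (hAv : ∀ n, 0 < Av c δ n) (l : ℝ) : ∀ N : ℕ,
    (∑ n ∈ Finset.range (N + 1),
        ∫ ω, (BSet X μ c δ n).indicator (expG X μ l n) ω ∂P)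
      + ∫ ω, (CSet X μ c δ N).indicator (expG X μ l N) ω ∂P ≤ 1 := by
  intro N
  induction N with
  | zero =>
    have hB0 : BSet X μ c δ 0 = ∅ := by
      ext ω
      simp only [BSet, Set.mem_setOf_eq, Set.mem_empty_iff_false, iff_false, not_and]
      intro h
      exact absurd h (by simp [Sc]; exact (hAv 0).le)
    have hC0 : CSet X μ c δ 0 = Set.univ := by
      ext ω
      simp only [CSet, Set.mem_setOf_eq, Set.mem_univ, iff_true]
      intro m hm
      rw [Nat.le_zero.mp hm]
      simp [Sc]
      exact (hAv 0).le
    have hg0 : expG X μ l 0 = fun _ => 1 := by funext ω; simp [expG, Sc]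
    rw [Finset.sum_range_one, hB0, hC0, hg0]
    simp
  | succ N ih =>
    have hBint : Integrable ((BSet X μ c δ (N+1)).indicator (expG X μ l (N+1))) P :=
      (expG_int hmeas hindep hsubg l (N+1)).indicator (BSet_meas hmeas c δ (N+1))
    have hCint : Integrable ((CSet X μ c δ (N+1)).indicator (expG X μ l (N+1))) P :=
      (expG_int hmeas hindep hsubg l (N+1)).indicator (CSet_meas hmeas c δ (N+1))
    have hsplit : BSet X μ c δ (N+1) ∪ CSet X μ c δ (N+1) = CSet X μ c δ N := by
      ext ω
      simp only [BSet, CSet, Set.mem_union, Set.mem_setOf_eq]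
      constructor
      · rintro (⟨_, h2⟩ | h)
        · intro m hm; exact h2 m (Nat.lt_succ_of_le hm)
        · intro m hm; exact h m (le_trans hm (Nat.le_succ N))
      · intro h
        by_cases hc : (Sc X μ (N+1) ω) ^ 2 ≤ Av c δ (N+1)
        · right
          intro m hm
          rcases Nat.lt_succ_iff_lt_or_eq.mp (Nat.lt_succ_of_le hm) with h' | h'
          · exact h m (Nat.lt_succ_iff.mp h')
          · rw [h']; exact hc
        · left
          exact ⟨lt_of_not_ge hc, fun m hm => h m (Nat.lt_succ_iff.mp hm)⟩
    have hdisj : Disjoint (BSet X μ c δ (N+1)) (CSet X μ c δ (N+1)) := by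
      rw [Set.disjoint_left]
      intro ω hB hC
      exact absurd (hC (N+1) le_rfl) (not_le.mpr hB.1)
    -- combine the two pieces into the C N indicator
    have hcomb : (∫ ω, (BSet X μ c δ (N+1)).indicator (expG X μ l (N+1)) ω ∂P)
        + ∫ ω, (CSet X μ c δ (N+1)).indicator (expG X μ l (N+1)) ω ∂P
        = ∫ ω, (CSet X μ c δ N).indicator (expG X μ l (N+1)) ω ∂P := by
      rw [← integral_add hBint hCint]
      congr 1
      funext ω
      rw [← hsplit, Set.indicator_union_of_disjoint hdisj]
    -- the supermartingale step
    have hstep : (∫ ω, (CSet X μ c δ N).indicator (expG X μ l (N+1)) ω ∂P)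
        ≤ ∫ ω, (CSet X μ c δ N).indicator (expG X μ l N) ω ∂P := by
      have hprod : ∀ ω, (CSet X μ c δ N).indicator (expG X μ l (N+1)) ω
          = (CSet X μ c δ N).indicator (expG X μ l N) ω
            * Real.exp (l * (X N ω - μ) - l ^ 2 / 2) := by
        intro ω
        by_cases hω : ω ∈ CSet X μ c δ N
        · rw [Set.indicator_of_mem hω, Set.indicator_of_mem hω, expG_succ l N ω]
        · rw [Set.indicator_of_notMem hω, Set.indicator_of_notMem hω, zero_mul]
      have hCNint : Integrable ((CSet X μ c δ N).indicator (expG X μ l N)) P :=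
        (expG_int hmeas hindep hsubg l N).indicator (CSet_meas hmeas c δ N)
      calc (∫ ω, (CSet X μ c δ N).indicator (expG X μ l (N+1)) ω ∂P)
          = ∫ ω, (CSet X μ c δ N).indicator (expG X μ l N) ω
              * Real.exp (l * (X N ω - μ) - l ^ 2 / 2) ∂P := by
            congr 1; funext ω; exact hprod ω
        _ = (∫ ω, (CSet X μ c δ N).indicator (expG X μ l N) ω ∂P)
              * ∫ ω, Real.exp (l * (X N ω - μ) - l ^ 2 / 2) ∂P :=
            (cset_indicator_indep hmeas hindep hsubg c δ l N).integral_mul_eq_mul_integral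
              hCNint.aestronglyMeasurable (step_int hsubg l N).aestronglyMeasurable
        _ ≤ (∫ ω, (CSet X μ c δ N).indicator (expG X μ l N) ω ∂P) * 1 := by
            apply mul_le_mul_of_nonneg_left (step_int_le hsubg l N)
            apply integral_nonneg
            intro ω
            exact Set.indicator_nonneg (fun x _ => Real.exp_nonneg _) ω
        _ = _ := mul_one _
    calc (∑ n ∈ Finset.range (N+2),
            ∫ ω, (BSet X μ c δ n).indicator (expG X μ l n) ω ∂P)
          + ∫ ω, (CSet X μ c δ (N+1)).indicator (expG X μ l (N+1)) ω ∂P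
        = (∑ n ∈ Finset.range (N+1),
            ∫ ω, (BSet X μ c δ n).indicator (expG X μ l n) ω ∂P)
          + ((∫ ω, (BSet X μ c δ (N+1)).indicator (expG X μ l (N+1)) ω ∂P)
          + ∫ ω, (CSet X μ c δ (N+1)).indicator (expG X μ l (N+1)) ω ∂P) := by
          rw [Finset.sum_range_succ]; ring
      _ = (∑ n ∈ Finset.range (N+1),
            ∫ ω, (BSet X μ c δ n).indicator (expG X μ l n) ω ∂P)
          + ∫ ω, (CSet X μ c δ N).indicator (expG X μ l (N+1)) ω ∂P := by rw [hcomb]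
      _ ≤ (∑ n ∈ Finset.range (N+1),
            ∫ ω, (BSet X μ c δ n).indicator (expG X μ l n) ω ∂P)
          + ∫ ω, (CSet X μ c δ N).indicator (expG X μ l N) ω ∂P := by linarith [hstep]
      _ ≤ 1 := ih

noncomputable def Mix (X : ℕ → Ω → ℝ) (μ : ℝ) (n : ℕ) (ω : Ω) : ℝ :=
  Real.exp ((Sc X μ n ω) ^ 2 / (2 * (1 + (n : ℝ)))) * Real.sqrt (2 * Real.pi / (1 + (n : ℝ)))

omit hindep hsubg in
lemma inner_l (c δ : ℝ) (n : ℕ) (ω : Ω) :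
    (∫⁻ l : ℝ, ENNReal.ofReal (Real.exp (0 * l - 1 * l ^ 2 / 2))
        * ENNReal.ofReal ((BSet X μ c δ n).indicator (expG X μ l n) ω))
      = (BSet X μ c δ n).indicator (fun ω => ENNReal.ofReal (Mix X μ n ω)) ω := by
  by_cases hω : ω ∈ BSet X μ c δ n
  · rw [Set.indicator_of_mem hω]
    have ha : (0 : ℝ) < 1 + (n : ℝ) := by positivity
    have hcomb : ∀ l : ℝ, Real.exp (0 * l - 1 * l ^ 2 / 2) * expG X μ l n ω
        = Real.exp (Sc X μ n ω * l - (1 + (n : ℝ)) * l ^ 2 / 2) := by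
      intro l; unfold expG; rw [← Real.exp_add]; congr 1; ring
    have h1 : (∫⁻ l : ℝ, ENNReal.ofReal (Real.exp (0 * l - 1 * l ^ 2 / 2))
          * ENNReal.ofReal ((BSet X μ c δ n).indicator (expG X μ l n) ω))
        = ∫⁻ l : ℝ, ENNReal.ofReal (Real.exp (Sc X μ n ω * l - (1 + (n : ℝ)) * l ^ 2 / 2)) := by
      apply lintegral_congr
      intro l
      rw [Set.indicator_of_mem hω, ← ENNReal.ofReal_mul (Real.exp_nonneg _), hcomb l]
    have h2 := ofReal_integral_eq_lintegral_ofReal (μ := volume)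
      (gauss_key (1 + (n:ℝ)) (Sc X μ n ω) ha).1
      (Filter.Eventually.of_forall fun l => Real.exp_nonneg _)
    rw [h1, ← h2, (gauss_key (1 + (n:ℝ)) (Sc X μ n ω) ha).2]
    rfl
  · rw [Set.indicator_of_notMem hω]
    simp [Set.indicator_of_notMem hω]

lemma bsum_le (c δ : ℝ) (hδ0 : 0 < δ) (hδc : δ < c) (N : ℕ) :
    ∑ n ∈ Finset.range (N + 1), P (BSet X μ c δ n) ≤ ENNReal.ofReal (δ / c) := by
  have hc : 0 < c := lt_trans hδ0 hδc
  have hδcr : 1 < c / δ := (one_lt_div hδ0).mpr hδc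
  have hAv : ∀ n : ℕ, 0 < Av c δ n := by
    intro n
    have h1 : (1 : ℝ) ≤ c * Real.sqrt (1 + n) / δ := by
      have hs : (1 : ℝ) ≤ Real.sqrt (1 + n) := by
        have h0 : (0:ℝ) ≤ 1 + n := by positivity
        nlinarith [Real.sq_sqrt h0, Real.sqrt_nonneg ((1:ℝ)+n)]
      calc (1:ℝ) ≤ c / δ := le_of_lt hδcr
        _ ≤ c * Real.sqrt (1 + n) / δ := by
          gcongr
          nlinarith [hc.le]
    have := Real.log_nonneg h1
    unfold Av
    apply mul_pos (by positivity) (by linarith)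
  set K := Real.sqrt (2 * Real.pi) with hKdef
  have hK : 0 < K := Real.sqrt_pos.mpr (by positivity)
  have hcdK : 0 < c / δ * K := mul_pos (div_pos hc hδ0) hK
  -- measurability of the joint map
  have hexp_joint : ∀ n : ℕ, Measurable (fun p : ℝ × Ω => expG X μ p.1 n p.2) := by
    intro n
    unfold expG
    apply Measurable.exp
    exact ((measurable_fst.mul ((Sc_meas hmeas μ n).comp measurable_snd)).sub
      (((measurable_fst.pow_const 2).const_mul (n : ℝ)).div_const 2))
  have hind_joint : ∀ n : ℕ, Measurable
      (fun p : ℝ × Ω => (BSet X μ c δ n).indicator (expG X μ p.1 n) p.2) := by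
    intro n
    have : (fun p : ℝ × Ω => (BSet X μ c δ n).indicator (expG X μ p.1 n) p.2)
        = Set.indicator ((Set.univ : Set ℝ) ×ˢ BSet X μ c δ n)
            (fun q : ℝ × Ω => expG X μ q.1 n q.2) := by
      funext p
      by_cases hp : p.2 ∈ BSet X μ c δ n
      · rw [Set.indicator_of_mem hp, Set.indicator_of_mem (by simp [hp])]
      · rw [Set.indicator_of_notMem hp, Set.indicator_of_notMem (by simp [hp])]
    rw [this]
    exact (hexp_joint n).indicator (MeasurableSet.univ.prod (BSet_meas hmeas c δ n))
  have hG_joint : ∀ n : ℕ, Measurable (fun p : ℝ × Ω =>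
      ENNReal.ofReal (Real.exp (0 * p.1 - 1 * p.1 ^ 2 / 2))
        * ENNReal.ofReal ((BSet X μ c δ n).indicator (expG X μ p.1 n) p.2)) := by
    intro n
    apply Measurable.fun_mul
    · apply ENNReal.measurable_ofReal.comp
      apply Measurable.exp
      exact ((measurable_fst.const_mul 0).sub
        ((measurable_fst.pow_const 2).const_mul 1 |>.div_const 2))
    · exact ENNReal.measurable_ofReal.comp (hind_joint n)
  -- per-n estimate
  have per_n : ∀ n : ℕ, ENNReal.ofReal (c / δ * K) * P (BSet X μ c δ n)
      ≤ ∫⁻ l : ℝ, ENNReal.ofReal (Real.exp (0 * l - 1 * l ^ 2 / 2))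
          * ∫⁻ ω, ENNReal.ofReal ((BSet X μ c δ n).indicator (expG X μ l n) ω) ∂P := by
    intro n
    have hMix : ∀ ω ∈ BSet X μ c δ n, ENNReal.ofReal (c / δ * K) ≤ ENNReal.ofReal (Mix X μ n ω) := by
      intro ω hω
      apply ENNReal.ofReal_le_ofReal
      have hs2 : Av c δ n < (Sc X μ n ω) ^ 2 := hω.1
      have ha : (0 : ℝ) < 1 + (n : ℝ) := by positivity
      have hsq : (1 : ℝ) ≤ Real.sqrt (1 + (n : ℝ)) := by
        have h0 : (0:ℝ) ≤ 1 + (n:ℝ) := by positivity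
        nlinarith [Real.sq_sqrt h0, Real.sqrt_nonneg ((1:ℝ)+(n:ℝ))]
      have harg : (0 : ℝ) < c * Real.sqrt (1 + (n : ℝ)) / δ :=
        div_pos (mul_pos hc (lt_of_lt_of_le one_pos hsq)) hδ0
      have hL : (Sc X μ n ω) ^ 2 / (2 * (1 + (n : ℝ)))
          > 1 / 2 + Real.log (c * Real.sqrt (1 + (n : ℝ)) / δ) := by
        have : Av c δ n = (1 + (n : ℝ)) * (1 + 2 * Real.log (c * Real.sqrt (1 + n) / δ)) := rfl
        rw [gt_iff_lt, lt_div_iff₀ (by positivity)]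
        nlinarith [hs2]
      have hexp : Real.exp ((Sc X μ n ω) ^ 2 / (2 * (1 + (n : ℝ))))
          ≥ Real.exp (1 / 2) * (c * Real.sqrt (1 + (n : ℝ)) / δ) := by
        calc Real.exp ((Sc X μ n ω) ^ 2 / (2 * (1 + (n : ℝ))))
            ≥ Real.exp (1 / 2 + Real.log (c * Real.sqrt (1 + (n : ℝ)) / δ)) :=
              Real.exp_le_exp.mpr hL.le
          _ = Real.exp (1 / 2) * (c * Real.sqrt (1 + (n : ℝ)) / δ) := by
              rw [Real.exp_add, Real.exp_log harg]
      have he12 : (1 : ℝ) ≤ Real.exp (1 / 2) := by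
        rw [show (1:ℝ) = Real.exp 0 by simp]
        exact Real.exp_le_exp.mpr (by norm_num)
      have hsqrts : Real.sqrt (1 + (n : ℝ)) * Real.sqrt (2 * Real.pi / (1 + (n : ℝ))) = K := by
        rw [← Real.sqrt_mul ha.le, hKdef]
        congr 1
        field_simp
      unfold Mix
      have hsp : (0:ℝ) < Real.sqrt (2 * Real.pi / (1 + (n:ℝ))) := Real.sqrt_pos.mpr (by positivity)
      calc c / δ * K = c / δ * (Real.sqrt (1 + (n:ℝ)) * Real.sqrt (2 * Real.pi / (1 + (n:ℝ)))) := by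
            rw [hsqrts]
        _ = (c * Real.sqrt (1 + (n:ℝ)) / δ) * Real.sqrt (2 * Real.pi / (1 + (n:ℝ))) := by ring
        _ ≤ (Real.exp (1/2) * (c * Real.sqrt (1 + (n:ℝ)) / δ)) * Real.sqrt (2 * Real.pi / (1 + (n:ℝ))) := by
            apply mul_le_mul_of_nonneg_right ?_ hsp.le
            nlinarith [harg, he12]
        _ ≤ _ := mul_le_mul_of_nonneg_right hexp hsp.le
    calc ENNReal.ofReal (c / δ * K) * P (BSet X μ c δ n)
        = ∫⁻ ω, (BSet X μ c δ n).indicator (fun _ => ENNReal.ofReal (c / δ * K)) ω ∂P := by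
          rw [lintegral_indicator_const (BSet_meas hmeas c δ n)]
      _ ≤ ∫⁻ ω, (BSet X μ c δ n).indicator (fun ω => ENNReal.ofReal (Mix X μ n ω)) ω ∂P := by
          apply lintegral_mono
          intro ω
          by_cases hω : ω ∈ BSet X μ c δ n
          · rw [Set.indicator_of_mem hω, Set.indicator_of_mem hω]
            exact hMix ω hω
          · rw [Set.indicator_of_notMem hω, Set.indicator_of_notMem hω]
      _ = ∫⁻ ω, (∫⁻ l : ℝ, ENNReal.ofReal (Real.exp (0 * l - 1 * l ^ 2 / 2))
            * ENNReal.ofReal ((BSet X μ c δ n).indicator (expG X μ l n) ω)) ∂P := by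
          apply lintegral_congr
          intro ω
          exact (inner_l hmeas c δ n ω).symm
      _ = ∫⁻ l : ℝ, (∫⁻ ω, ENNReal.ofReal (Real.exp (0 * l - 1 * l ^ 2 / 2))
            * ENNReal.ofReal ((BSet X μ c δ n).indicator (expG X μ l n) ω) ∂P) := by
          exact (lintegral_lintegral_swap (hG_joint n).aemeasurable).symm
      _ = ∫⁻ l : ℝ, ENNReal.ofReal (Real.exp (0 * l - 1 * l ^ 2 / 2))
            * ∫⁻ ω, ENNReal.ofReal ((BSet X μ c δ n).indicator (expG X μ l n) ω) ∂P := by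
          apply lintegral_congr
          intro l
          have hmi : Measurable fun ω =>
              ENNReal.ofReal ((BSet X μ c δ n).indicator (expG X μ l n) ω) :=
            ENNReal.measurable_ofReal.comp
              ((expG_meas hmeas l n).indicator (BSet_meas hmeas c δ n))
          rw [lintegral_const_mul _ hmi]
  -- sum over n
  have hInd_int : ∀ (n : ℕ) (l : ℝ),
      Integrable ((BSet X μ c δ n).indicator (expG X μ l n)) P := fun n l =>
    (expG_int hmeas hindep hsubg l n).indicator (BSet_meas hmeas c δ n)
  have hmeasq : ∀ n : ℕ, Measurable (fun l : ℝ =>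
      ENNReal.ofReal (Real.exp (0 * l - 1 * l ^ 2 / 2))
        * ∫⁻ ω, ENNReal.ofReal ((BSet X μ c δ n).indicator (expG X μ l n) ω) ∂P) := by
    intro n
    apply Measurable.fun_mul
    · apply ENNReal.measurable_ofReal.comp
      apply Measurable.exp
      exact ((measurable_const.mul measurable_id).sub
        (((measurable_id.pow_const 2).const_mul 1).div_const 2))
    · exact Measurable.lintegral_prod_right
        (ENNReal.measurable_ofReal.comp (hind_joint n))
  have main : ENNReal.ofReal (c / δ * K) * ∑ n ∈ Finset.range (N + 1), P (BSet X μ c δ n)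
      ≤ ENNReal.ofReal K := by
    calc ENNReal.ofReal (c / δ * K) * ∑ n ∈ Finset.range (N + 1), P (BSet X μ c δ n)
        = ∑ n ∈ Finset.range (N + 1), ENNReal.ofReal (c / δ * K) * P (BSet X μ c δ n) := by
          rw [Finset.mul_sum]
      _ ≤ ∑ n ∈ Finset.range (N + 1), ∫⁻ l : ℝ,
            ENNReal.ofReal (Real.exp (0 * l - 1 * l ^ 2 / 2))
              * ∫⁻ ω, ENNReal.ofReal ((BSet X μ c δ n).indicator (expG X μ l n) ω) ∂P :=
          Finset.sum_le_sum fun n _ => per_n n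
      _ = ∫⁻ l : ℝ, ∑ n ∈ Finset.range (N + 1),
            ENNReal.ofReal (Real.exp (0 * l - 1 * l ^ 2 / 2))
              * ∫⁻ ω, ENNReal.ofReal ((BSet X μ c δ n).indicator (expG X μ l n) ω) ∂P :=
          (lintegral_finset_sum _ (fun n _ => hmeasq n)).symm
      _ ≤ ∫⁻ l : ℝ, ENNReal.ofReal (Real.exp (0 * l - 1 * l ^ 2 / 2)) := by
          apply lintegral_mono
          intro l
          beta_reduce
          rw [← Finset.mul_sum]
          have hsum : ∑ n ∈ Finset.range (N + 1),
              (∫⁻ ω, ENNReal.ofReal ((BSet X μ c δ n).indicator (expG X μ l n) ω) ∂P) ≤ 1 := by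
            have heq : ∀ n : ℕ,
                (∫⁻ ω, ENNReal.ofReal ((BSet X μ c δ n).indicator (expG X μ l n) ω) ∂P)
                  = ENNReal.ofReal (∫ ω, (BSet X μ c δ n).indicator (expG X μ l n) ω ∂P) := by
              intro n
              exact (ofReal_integral_eq_lintegral_ofReal (hInd_int n l)
                (Filter.Eventually.of_forall fun ω =>
                  Set.indicator_nonneg (fun x _ => Real.exp_nonneg _) ω)).symm
            calc ∑ n ∈ Finset.range (N + 1),
                (∫⁻ ω, ENNReal.ofReal ((BSet X μ c δ n).indicator (expG X μ l n) ω) ∂P)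
                = ∑ n ∈ Finset.range (N + 1), ENNReal.ofReal
                    (∫ ω, (BSet X μ c δ n).indicator (expG X μ l n) ω ∂P) := by
                  exact Finset.sum_congr rfl fun n _ => heq n
              _ = ENNReal.ofReal (∑ n ∈ Finset.range (N + 1),
                    ∫ ω, (BSet X μ c δ n).indicator (expG X μ l n) ω ∂P) :=
                  (ENNReal.ofReal_sum_of_nonneg fun n _ => integral_nonneg fun ω =>
                    Set.indicator_nonneg (fun x _ => Real.exp_nonneg _) ω).symm
              _ ≤ 1 := by
                  rw [show (1 : ℝ≥0∞) = ENNReal.ofReal 1 by simp]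
                  apply ENNReal.ofReal_le_ofReal
                  have hC : 0 ≤ ∫ ω, (CSet X μ c δ N).indicator (expG X μ l N) ω ∂P :=
                    integral_nonneg fun ω =>
                      Set.indicator_nonneg (fun x _ => Real.exp_nonneg _) ω
                  linarith [ville hmeas hindep hsubg c δ hAv l N]
          calc ENNReal.ofReal (Real.exp (0 * l - 1 * l ^ 2 / 2)) * ∑ n ∈ Finset.range (N + 1),
                (∫⁻ ω, ENNReal.ofReal ((BSet X μ c δ n).indicator (expG X μ l n) ω) ∂P)
              ≤ ENNReal.ofReal (Real.exp (0 * l - 1 * l ^ 2 / 2)) * 1 :=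
                mul_le_mul_right hsum _
            _ = ENNReal.ofReal (Real.exp (0 * l - 1 * l ^ 2 / 2)) := mul_one _
      _ = ENNReal.ofReal K := by
          rw [← ofReal_integral_eq_lintegral_ofReal (gauss_key 1 0 one_pos).1
            (Filter.Eventually.of_forall fun l => Real.exp_nonneg _), (gauss_key 1 0 one_pos).2,
            hKdef]
          norm_num
  -- conclude
  have ha0 : ENNReal.ofReal (c / δ * K) ≠ 0 := by
    simp only [ne_eq, ENNReal.ofReal_eq_zero, not_le]
    exact hcdK
  have haT : ENNReal.ofReal (c / δ * K) ≠ ⊤ := ENNReal.ofReal_ne_top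
  have hmain2 : (∑ n ∈ Finset.range (N + 1), P (BSet X μ c δ n))
      * ENNReal.ofReal (c / δ * K) ≤ ENNReal.ofReal K := by
    rw [mul_comm]; exact main
  calc ∑ n ∈ Finset.range (N + 1), P (BSet X μ c δ n)
      ≤ ENNReal.ofReal K / ENNReal.ofReal (c / δ * K) :=
        (ENNReal.le_div_iff_mul_le (Or.inl ha0) (Or.inl haT)).mpr hmain2
    _ = ENNReal.ofReal (K / (c / δ * K)) := by
        rw [ENNReal.ofReal_div_of_pos hcdK]
    _ = ENNReal.ofReal (δ / c) := by
        congr 1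
        field_simp

end Main

/-- **Anytime self-normalized concentration for i.i.d. 1-sub-Gaussian sequences
(Lemma 6 of Abbasi-Yadkori et al., i.i.d. specialization).**
If `X 0, X 1, …` are i.i.d. with mean `μ` and `1`-sub-Gaussian centered increments, then for
any real `c ≥ 1` and any `0 < δ < c`, with probability at least `1 - δ/c`, simultaneously for
every sample size `n ≥ 1`,
`|μ̂_n - μ| ≤ √(((1+n)/n²)·(1 + 2 log(c·√(1+n)/δ)))`. -/
theorem anytime_selfnormalized_concentration
    {Ω : Type*} [MeasurableSpace Ω] (P : Measure Ω) [IsProbabilityMeasure P]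
    (X : ℕ → Ω → ℝ) (μ : ℝ)
    (hmeas : ∀ k, Measurable (X k))
    (hindep : iIndepFun X P)
    (hident : ∀ k l, IdentDistrib (X k) (X l) P P)
    (hmean : ∀ k, ∫ ω, X k ω ∂P = μ)
    (hsubg : ∀ k (l : ℝ),
      Integrable (fun ω => Real.exp (l * (X k ω - μ))) P ∧
      ∫ ω, Real.exp (l * (X k ω - μ)) ∂P ≤ Real.exp (l ^ 2 / 2))
    (c δ : ℝ) (hc : 1 ≤ c) (hδ0 : 0 < δ) (hδc : δ < c) :
    ENNReal.ofReal (1 - δ / c)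
      ≤ P {ω | ∀ n : ℕ, 1 ≤ n →
          |(∑ k ∈ Finset.range n, X k ω) / n - μ|
            ≤ Real.sqrt ((1 + n) / (n : ℝ) ^ 2
                * (1 + 2 * Real.log (c * Real.sqrt (1 + n) / δ)))} := by
  have hc0 : 0 < c := lt_trans hδ0 hδc
  set E : Set Ω := {ω | ∀ n : ℕ, 1 ≤ n →
      |(∑ k ∈ Finset.range n, X k ω) / n - μ|
        ≤ Real.sqrt ((1 + n) / (n : ℝ) ^ 2
            * (1 + 2 * Real.log (c * Real.sqrt (1 + n) / δ)))} with hE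
  have hEmeas : MeasurableSet E := by
    have : E = ⋂ n, ⋂ (_ : 1 ≤ n), {ω | |(∑ k ∈ Finset.range n, X k ω) / n - μ|
        ≤ Real.sqrt ((1 + n) / (n : ℝ) ^ 2
            * (1 + 2 * Real.log (c * Real.sqrt (1 + n) / δ)))} := by
      ext ω; simp [hE]
    rw [this]
    refine MeasurableSet.iInter fun n => MeasurableSet.iInter fun _ => ?_
    exact measurableSet_le
      (((Finset.measurable_sum _ fun k _ => hmeas k).div_const _).sub measurable_const).abs
      measurable_const
  -- complement is contained in the union of the B sets
  have hsub : Eᶜ ⊆ ⋃ n, BSet X μ c δ n := by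
    intro ω hω
    have hω' : ∃ n : ℕ, 1 ≤ n ∧ ¬(|(∑ k ∈ Finset.range n, X k ω) / n - μ|
        ≤ Real.sqrt ((1 + n) / (n : ℝ) ^ 2
            * (1 + 2 * Real.log (c * Real.sqrt (1 + n) / δ)))) := by
      by_contra h
      push_neg at h
      exact hω (fun n hn => h n hn)
    obtain ⟨n, hn1, hlt⟩ := hω'
    have hex : ∃ m : ℕ, Av c δ m < (Sc X μ m ω) ^ 2 := by
      refine ⟨n, ?_⟩
      have hnR : (0:ℝ) < (n:ℝ) := by exact_mod_cast hn1
      have hnne : (n:ℝ) ≠ 0 := hnR.ne'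
      set t := Real.log (c * Real.sqrt (1 + (n:ℝ)) / δ) with ht
      have hsq1 : (1 : ℝ) ≤ Real.sqrt (1 + (n:ℝ)) := by
        have h0 : (0:ℝ) ≤ 1 + (n:ℝ) := by positivity
        nlinarith [Real.sq_sqrt h0, Real.sqrt_nonneg ((1:ℝ)+(n:ℝ))]
      have htn : 0 ≤ t := by
        apply Real.log_nonneg
        calc (1:ℝ) ≤ c / δ := le_of_lt ((one_lt_div hδ0).mpr hδc)
          _ ≤ c * Real.sqrt (1 + (n:ℝ)) / δ := by gcongr; nlinarith [hc0.le]
      set y := (1 + (n:ℝ)) / (n : ℝ) ^ 2 * (1 + 2 * t) with hy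
      have hy0 : 0 ≤ y := by positivity
      have h1 : Real.sqrt y < |(∑ k ∈ Finset.range n, X k ω) / n - μ| := not_le.mp hlt
      have h2 : y < ((∑ k ∈ Finset.range n, X k ω) / n - μ) ^ 2 := by
        calc y = Real.sqrt y ^ 2 := (Real.sq_sqrt hy0).symm
          _ < |(∑ k ∈ Finset.range n, X k ω) / n - μ| ^ 2 :=
              pow_lt_pow_left₀ h1 (Real.sqrt_nonneg _) (by norm_num)
          _ = ((∑ k ∈ Finset.range n, X k ω) / n - μ) ^ 2 := sq_abs _
      have hv : (∑ k ∈ Finset.range n, X k ω) / n - μ = Sc X μ n ω / n := by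
        unfold Sc
        rw [Finset.sum_sub_distrib, Finset.sum_const, Finset.card_range]
        field_simp
        rw [nsmul_eq_mul]
      rw [hv] at h2
      have h3 : y * (n:ℝ)^2 < (Sc X μ n ω / n)^2 * (n:ℝ)^2 :=
        mul_lt_mul_of_pos_right h2 (by positivity)
      have h4 : (Sc X μ n ω / n)^2 * (n:ℝ)^2 = (Sc X μ n ω)^2 := by
        field_simp
      have h5 : y * (n:ℝ)^2 = Av c δ n := by
        unfold Av
        rw [hy]
        field_simp
        rw [ht]
      rw [h4, h5] at h3
      exact h3
    refine Set.mem_iUnion.mpr ⟨Nat.find hex, Nat.find_spec hex, fun m hm => ?_⟩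
    exact not_lt.mp (Nat.find_min hex hm)
  -- disjointness of the B sets
  have hdisj : Pairwise (Function.onFun Disjoint (BSet X μ c δ)) := by
    intro n m hnm
    have key : ∀ a b : ℕ, a < b → Disjoint (BSet X μ c δ a) (BSet X μ c δ b) := by
      intro a b hab
      rw [Set.disjoint_left]
      intro ω ha hb
      exact absurd (hb.2 a hab) (not_le.mpr ha.1)
    rcases lt_or_gt_of_ne hnm with h | h
    · exact key n m h
    · exact (key m n h).symm
  have hPU : P (⋃ n, BSet X μ c δ n) = ∑' n, P (BSet X μ c δ n) :=
    measure_iUnion hdisj (fun n => BSet_meas hmeas c δ n)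
  have htsum : ∑' n, P (BSet X μ c δ n) ≤ ENNReal.ofReal (δ / c) := by
    rw [ENNReal.tsum_eq_iSup_sum]
    apply iSup_le
    intro s
    obtain ⟨N, hN⟩ : ∃ N : ℕ, s ⊆ Finset.range (N + 1) :=
      ⟨s.sup id, fun x hx => Finset.mem_range.mpr (Nat.lt_succ_of_le (Finset.le_sup (f := id) hx))⟩
    calc ∑ n ∈ s, P (BSet X μ c δ n)
        ≤ ∑ n ∈ Finset.range (N + 1), P (BSet X μ c δ n) :=
          Finset.sum_le_sum_of_subset hN
      _ ≤ ENNReal.ofReal (δ / c) := bsum_le hmeas hindep hsubg c δ hδ0 hδc N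
  have hcompl : P Eᶜ ≤ ENNReal.ofReal (δ / c) := by
    calc P Eᶜ ≤ P (⋃ n, BSet X μ c δ n) := measure_mono hsub
      _ = ∑' n, P (BSet X μ c δ n) := hPU
      _ ≤ ENNReal.ofReal (δ / c) := htsum
  have hPE : P E = 1 - P Eᶜ := by
    conv_lhs => rw [← compl_compl E]
    exact prob_compl_eq_one_sub hEmeas.compl
  rw [hPE]
  have hδc1 : δ / c ≤ 1 := le_of_lt ((div_lt_one hc0).mpr hδc)
  calc ENNReal.ofReal (1 - δ / c)
      = 1 - ENNReal.ofReal (δ / c) := by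
        rw [ENNReal.ofReal_sub _ (le_of_lt (div_pos hδ0 hc0)), ENNReal.ofReal_one]
    _ ≤ 1 - P Eᶜ := tsub_le_tsub_left hcompl 1
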